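/- Let $0<p<1$, $\mu>0$, $\sigma>0$, $\beta>0$, $l>0$, $0<k<r$, and suppose $\kappa\ge r$ where $\kappa:=\frac{\beta-p\left(\frac{\mu^2}{2\sigma^2(1-p)}+r\right)}{1-p}$. Suppose $v:(0,\infty)\to\mathbb{R}$ is three times continuously differentiable with $v''(y)>0$ and $v'(y)<-\frac{l}{r-k}$ for all $y>0$, solves the dual ODE $\beta\big(v(y)-y\,v'(y)\big)-\frac{\mu^2}{2\sigma^2}y^2 v''(y)-G\big(-k\,v'(y)+l,\;y\big)+r\,y\,v'(y)=0$ for all $y>0$, and there exists $y_2>0$ such that $v'(y)>-\frac{1}{k}y^{1/(p-1)}+\frac{l}{k}$ for all $y\in(0,y_2)$. Then there exists $y^*>0$ such that $v'(y)>-\frac{1}{k}y^{1/(p-1)}+\frac{l}{k}$ for all $y\in(0,y^*)$ and $v'(y)\le -\frac{1}{k}y^{1/(p-1)}+\frac{l}{k}$ for all $y\ge y^*$. -/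

import Mathlib

open Real Set Filter Topology

/-- `G p u y = sup_{c ≥ u} (c^p/p - c y)`. -/
noncomputable def G (p u y : ℝ) : ℝ :=
  sSup ((fun c : ℝ => c ^ p / p - c * y) '' {c : ℝ | u ≤ c})

section helpers

lemma amgm2 {p a b : ℝ} (hp0 : 0 < p) (hp1 : p < 1) (ha : 0 ≤ a) (hb : 0 ≤ b) :
    a ^ p * b ^ (1 - p) ≤ p * a + (1 - p) * b :=
  Real.geom_mean_le_arith_mean2_weighted hp0.le (by linarith) ha hb (by ring)

lemma value_le {p y : ℝ} (hp0 : 0 < p) (hp1 : p < 1) (hy : 0 < y) {c : ℝ} (hc : 0 ≤ c) :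
    c ^ p / p - c * y ≤ (1 - p) / p * y ^ (1 / (p - 1) + 1) := by
  have hp1' : p - 1 ≠ 0 := by intro h; linarith [h]
  set s : ℝ := 1 / (p - 1) with hs
  have hyp : (0:ℝ) < y ^ (s + 1) := Real.rpow_pos_of_pos hy _
  have key : c ^ p ≤ p * (c * y) + (1 - p) * y ^ (s + 1) := by
    have h := amgm2 hp0 hp1 (mul_nonneg hc hy.le) hyp.le
    have h2 : (c * y) ^ p * (y ^ (s + 1)) ^ (1 - p) = c ^ p := by
      rw [Real.mul_rpow hc hy.le, ← Real.rpow_mul hy.le, mul_assoc, ← Real.rpow_add hy]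
      have h3 : p + (s + 1) * (1 - p) = 0 := by
        rw [hs]; field_simp; ring
      rw [h3, Real.rpow_zero, mul_one]
    rw [h2] at h; exact h
  have h4 : c ^ p / p ≤ c * y + (1 - p) / p * y ^ (s + 1) := by
    rw [div_le_iff₀ hp0]
    calc c ^ p ≤ p * (c * y) + (1 - p) * y ^ (s + 1) := key
      _ = (c * y + (1 - p) / p * y ^ (s + 1)) * p := by field_simp
  linarith

lemma G_bdd {p u y : ℝ} (hp0 : 0 < p) (hp1 : p < 1) (hu : 0 < u) (hy : 0 < y) :
    BddAbove ((fun c : ℝ => c ^ p / p - c * y) '' {c : ℝ | u ≤ c}) := by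
  refine ⟨(1 - p) / p * y ^ (1 / (p - 1) + 1), ?_⟩
  rintro z ⟨c, hc, rfl⟩
  exact value_le hp0 hp1 hy (le_trans hu.le hc)

lemma G_ge {p u y : ℝ} (hp0 : 0 < p) (hp1 : p < 1) (hu : 0 < u) (hy : 0 < y) :
    u ^ p / p - u * y ≤ G p u y := by
  unfold G
  exact le_csSup (G_bdd hp0 hp1 hu hy) ⟨u, le_refl u, rfl⟩

lemma G_binding {p u y : ℝ} (hp0 : 0 < p) (hp1 : p < 1) (hu : 0 < u) (hy : 0 < y)
    (hb : u ^ (p - 1) ≤ y) :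
    G p u y = u ^ p / p - u * y := by
  unfold G
  apply IsGreatest.csSup_eq
  constructor
  · exact ⟨u, le_refl u, rfl⟩
  · rintro z ⟨c, (hc : u ≤ c), rfl⟩
    have hc0 : 0 < c := lt_of_lt_of_le hu hc
    have h1 : c ^ p * u ^ (1 - p) ≤ p * c + (1 - p) * u := amgm2 hp0 hp1 hc0.le hu.le
    have h2 : c ^ p = c ^ p * u ^ (1 - p) * u ^ (p - 1) := by
      rw [mul_assoc, ← Real.rpow_add hu]; norm_num
    have hup : (0:ℝ) < u ^ (p - 1) := Real.rpow_pos_of_pos hu _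
    have h3 : c ^ p ≤ (p * c + (1 - p) * u) * u ^ (p - 1) := by
      rw [h2]; exact mul_le_mul_of_nonneg_right h1 hup.le
    have h4 : u * u ^ (p - 1) = u ^ p := by
      nth_rewrite 1 [← Real.rpow_one u]; rw [← Real.rpow_add hu]; norm_num
    have h5 : c ^ p - u ^ p ≤ p * (c - u) * u ^ (p - 1) := by nlinarith [h3, h4]
    have h6 : p * (c - u) * u ^ (p - 1) ≤ p * (c - u) * y := by
      apply mul_le_mul_of_nonneg_left hb
      nlinarith
    have h7 : (c ^ p - u ^ p) / p ≤ (c - u) * y := by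
      rw [div_le_iff₀ hp0]; nlinarith
    rw [sub_div] at h7
    simp only []
    linarith

lemma second_deriv_test_min {f f' : ℝ → ℝ} {a d : ℝ}
    (hf : ∀ᶠ x in 𝓝 a, HasDerivAt f (f' x) x)
    (hf' : HasDerivAt f' d a) (hfa : f' a = 0)
    (hmin : IsLocalMin f a) : 0 ≤ d := by
  by_contra hd
  push_neg at hd
  have hslope : Tendsto (slope f' a) (𝓝[>] a) (𝓝 d) := by
    have h1 := (hf'.hasDerivWithinAt (s := Ioi a))
    rw [hasDerivWithinAt_iff_tendsto_slope' (notMem_Ioi.mpr le_rfl)] at h1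
    exact h1
  have hs1 : ∀ᶠ x in 𝓝[>] a, slope f' a x < 0 := hslope.eventually_lt_const hd
  have hs2 : ∀ᶠ x in 𝓝[>] a, f' x < 0 := by
    filter_upwards [hs1, self_mem_nhdsWithin] with x hx hxa
    have hpos : 0 < x - a := sub_pos.mpr hxa
    rw [slope_def_field] at hx
    have h2 : (f' x - f' a) / (x - a) * (x - a) < 0 := mul_neg_of_neg_of_pos hx hpos
    rw [div_mul_cancel₀ _ hpos.ne'] at h2
    rw [hfa] at h2
    linarith
  have hs3 : ∀ᶠ x in 𝓝[>] a, HasDerivAt f (f' x) x := nhdsWithin_le_nhds hf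
  have hs4 : ∀ᶠ x in 𝓝[>] a, f a ≤ f x := nhdsWithin_le_nhds hmin
  obtain ⟨b, hab, hIoc⟩ := mem_nhdsGT_iff_exists_Ioc_subset.mp
    ((hs2.and (hs3.and hs4)) : _ ∈ 𝓝[>] a)
  have hab' : a < b := hab
  have hanti : StrictAntiOn f (Icc a b) := by
    apply strictAntiOn_of_deriv_neg (convex_Icc a b)
    · intro x hx
      rcases eq_or_lt_of_le hx.1 with h | hax
      · subst h
        exact (hf.self_of_nhds).continuousAt.continuousWithinAt
      · exact ((hIoc ⟨hax, hx.2⟩).2.1).continuousAt.continuousWithinAt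
    · intro x hx
      rw [interior_Icc] at hx
      have hprop := hIoc ⟨hx.1, hx.2.le⟩
      rw [hprop.2.1.deriv]
      exact hprop.1
  have h1 : f b < f a := hanti ⟨le_rfl, hab'.le⟩ ⟨hab'.le, le_rfl⟩ hab'
  have h2 : f a ≤ f b := (hIoc ⟨hab', le_rfl⟩).2.2
  linarith

end helpers

set_option maxHeartbeats 1600000 in
/-- large discount factor case (`κ ≥ r`). For a `C³` solution `v` of the
dual ODE with `v'' > 0`, `v' < -l/(r-k)`, which near `0` satisfies the strict (slack)
inequality, there is a single threshold `y*` separating the slack region `(0,y*)` from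
the binding region `[y*,∞)`. -/
theorem stmt_11 (p μ σ β r k l : ℝ) (hp0 : 0 < p) (hp1 : p < 1) (hμ : 0 < μ) (hσ : 0 < σ)
    (hβ : 0 < β) (hl : 0 < l) (hk : 0 < k) (hkr : k < r)
    (hκr : r ≤ (β - p * (μ ^ 2 / (2 * σ ^ 2 * (1 - p)) + r)) / (1 - p))
    (v : ℝ → ℝ) (hv : ContDiffOn ℝ 3 v (Ioi 0))
    (hv'' : ∀ y ∈ Ioi (0 : ℝ), 0 < deriv (deriv v) y)
    (hv' : ∀ y ∈ Ioi (0 : ℝ), deriv v y < -(l / (r - k)))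
    (hODE : ∀ y ∈ Ioi (0 : ℝ),
      β * (v y - y * deriv v y) - μ ^ 2 / (2 * σ ^ 2) * y ^ 2 * deriv (deriv v) y
        - G p (-k * deriv v y + l) y + r * y * deriv v y = 0)
    (y₂ : ℝ) (hy₂ : 0 < y₂)
    (hnear0 : ∀ y ∈ Ioo (0 : ℝ) y₂, -(1 / k) * y ^ (1 / (p - 1)) + l / k < deriv v y) :
    ∃ ystar : ℝ, 0 < ystar ∧
      (∀ y ∈ Ioo (0 : ℝ) ystar, -(1 / k) * y ^ (1 / (p - 1)) + l / k < deriv v y) ∧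
      (∀ y : ℝ, ystar ≤ y → deriv v y ≤ -(1 / k) * y ^ (1 / (p - 1)) + l / k) := by
  have hp1' : p - 1 ≠ 0 := by intro h; linarith [h]
  have h1p : (0:ℝ) < 1 - p := by linarith
  set s : ℝ := 1 / (p - 1) with hs
  have hsneg : s < 0 := by
    rw [hs]; apply div_neg_of_pos_of_neg one_pos; linarith
  have hrk : 0 < r - k := by linarith
  have hr : 0 < r := hk.trans hkr
  set E : ℝ := μ ^ 2 / (2 * σ ^ 2) with hE
  have hEpos : 0 < E := by rw [hE]; positivity
  have hopen : IsOpen (Ioi (0:ℝ)) := isOpen_Ioi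
  -- derivatives of v
  have hA2 : ContDiffOn ℝ 2 (deriv v) (Ioi 0) := hv.deriv_of_isOpen hopen (by norm_num)
  have hB1 : ContDiffOn ℝ 1 (deriv (deriv v)) (Ioi 0) := hA2.deriv_of_isOpen hopen (by norm_num)
  have hAderiv : ∀ x ∈ Ioi (0:ℝ), HasDerivAt v (deriv v x) x := fun x hx =>
    ((hv.differentiableOn (by norm_num)).differentiableAt (hopen.mem_nhds hx)).hasDerivAt
  have hBderiv : ∀ x ∈ Ioi (0:ℝ), HasDerivAt (deriv v) (deriv (deriv v) x) x := fun x hx =>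
    ((hA2.differentiableOn (by norm_num)).differentiableAt (hopen.mem_nhds hx)).hasDerivAt
  have hCderiv : ∀ x ∈ Ioi (0:ℝ), HasDerivAt (deriv (deriv v)) (deriv (deriv (deriv v)) x) x :=
    fun x hx =>
    ((hB1.differentiableOn (by norm_num)).differentiableAt (hopen.mem_nhds hx)).hasDerivAt
  have hAcont : ContinuousOn (deriv v) (Ioi 0) := hA2.continuousOn
  -- the boundary function g
  set g : ℝ → ℝ := fun y => -(1 / k) * y ^ s + l / k with hg
  set hfun : ℝ → ℝ := fun y => deriv v y - g y with hh
  have hgcont : ContinuousOn g (Ioi 0) := by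
    rw [hg]
    apply ContinuousOn.add
    · apply ContinuousOn.mul continuousOn_const
      apply ContinuousOn.rpow_const continuousOn_id
      intro x hx; exact Or.inl (ne_of_gt hx)
    · exact continuousOn_const
  have hhcont : ContinuousOn hfun (Ioi 0) := by
    rw [hh]; exact hAcont.sub hgcont
  -- positivity of the constrained consumption
  have hu_lb : ∀ x ∈ Ioi (0:ℝ), l * r / (r - k) < -k * deriv v x + l := by
    intro x hx
    have h := hv' x hx
    rw [div_lt_iff₀ hrk]
    have h1 : k * deriv v x < k * (-(l / (r - k))) := mul_lt_mul_of_pos_left h hk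
    have h3 : (k * (-(l / (r - k)))) * (r - k) = -(k * l) := by field_simp
    have h4 : (k * deriv v x) * (r - k) < (k * (-(l / (r - k)))) * (r - k) :=
      mul_lt_mul_of_pos_right h1 hrk
    rw [h3] at h4
    linarith only [h4]
  have hu_pos : ∀ x ∈ Ioi (0:ℝ), 0 < -k * deriv v x + l := fun x hx =>
    lt_trans (div_pos (mul_pos hl hr) hrk) (hu_lb x hx)
  -- slack points are below the explicit bound
  have slack_bound : ∀ x ∈ Ioi (0:ℝ), g x < deriv v x → l * r / (r - k) < x ^ s := by
    intro x hx hgx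
    have h := hv' x hx
    rw [hg] at hgx
    simp only at hgx
    have e1 : -(1 / k) * x ^ s + l / k < -(l / (r - k)) := lt_trans hgx h
    have e2 : k * (r - k) * (-(1 / k) * x ^ s + l / k) < k * (r - k) * (-(l / (r - k))) :=
      mul_lt_mul_of_pos_left e1 (mul_pos hk hrk)
    have e3 : k * (r - k) * (-(1 / k) * x ^ s + l / k) = -(r - k) * x ^ s + l * (r - k) := by
      field_simp
    have e4 : k * (r - k) * (-(l / (r - k))) = -(k * l) := by field_simp
    rw [e3, e4] at e2
    rw [div_lt_iff₀ hrk]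
    linarith only [e2]
  -- a binding point exists
  have hlr : 0 < l * r / (r - k) := div_pos (mul_pos hl hr) hrk
  set Y0 : ℝ := (l * r / (r - k)) ^ (p - 1) with hY0
  have hY0pos : Y0 ∈ Ioi (0:ℝ) := Real.rpow_pos_of_pos hlr _
  have hY0s : Y0 ^ s = l * r / (r - k) := by
    rw [hY0, ← Real.rpow_mul hlr.le]
    rw [show (p - 1) * s = 1 by rw [hs]; field_simp]
    exact Real.rpow_one _
  have hY0binding : deriv v Y0 ≤ g Y0 := by
    have hgY0 : g Y0 = -(l / (r - k)) := by
      rw [hg]; simp only; rw [hY0s]; field_simp; ring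
    rw [hgY0]; exact (hv' Y0 hY0pos).le
  -- definition of ystar
  set S : Set ℝ := {x | 0 < x ∧ deriv v x ≤ g x} with hS
  have hSne : S.Nonempty := ⟨Y0, hY0pos, hY0binding⟩
  have hSlb : ∀ x ∈ S, y₂ ≤ x := by
    intro x hx
    by_contra hlt
    push_neg at hlt
    have hslx := hnear0 x ⟨hx.1, hlt⟩
    have : g x < deriv v x := by rw [hg]; simpa using hslx
    have h2 : deriv v x ≤ g x := hx.2
    linarith
  have hSbdd : BddBelow S := ⟨y₂, hSlb⟩
  set ystar := sInf S with hystar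
  have hy₂star : y₂ ≤ ystar := le_csInf hSne hSlb
  have hstarpos : 0 < ystar := lt_of_lt_of_le hy₂ hy₂star
  -- slack on (0, ystar)
  have hslack : ∀ x ∈ Ioo (0:ℝ) ystar, g x < deriv v x := by
    intro x hx
    by_contra hc
    push_neg at hc
    have : ystar ≤ x := csInf_le hSbdd ⟨hx.1, hc⟩
    linarith [hx.2]
  -- binding at ystar
  have hstarle : deriv v ystar ≤ g ystar := by
    by_contra hc
    push_neg at hc
    have hcontat : ContinuousAt hfun ystar := hhcont.continuousAt (hopen.mem_nhds hstarpos)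
    have hpos : (0:ℝ) < hfun ystar := by rw [hh]; simp only; linarith
    have hev : ∀ᶠ x in 𝓝 ystar, 0 < hfun x := hcontat.eventually_const_lt hpos
    obtain ⟨ε, hε, hball⟩ := Metric.eventually_nhds_iff.mp hev
    obtain ⟨x, hxS, hxlt⟩ := Real.lt_sInf_add_pos hSne hε
    have hxge : ystar ≤ x := csInf_le hSbdd hxS
    have hdist : dist x ystar < ε := by
      rw [Real.dist_eq, abs_of_nonneg (by linarith)]
      rw [hystar]; linarith
    have h1 := hball hdist
    have h2 : hfun x ≤ 0 := by rw [hh]; simp only; linarith [hxS.2]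
    linarith
  -- the main claim : binding for all y ≥ ystar
  have hmain : ∀ c, ystar ≤ c → deriv v c ≤ g c := by
    intro c hcge
    by_contra hcneg
    push_neg at hcneg
    have hcpos : (0:ℝ) < c := lt_of_lt_of_le hstarpos hcge
    have hcI : c ∈ Ioi (0:ℝ) := hcpos
    have hcne : ystar < c := by
      rcases eq_or_lt_of_le hcge with hh' | hh'
      · exfalso; rw [← hh'] at hcneg; linarith
      · exact hh'
    set w := y₂ / 2 with hw
    have hwpos : 0 < w := by rw [hw]; linarith
    have hwy₂ : w < y₂ := by rw [hw]; linarith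
    have hwstar : w < ystar := lt_of_lt_of_le hwy₂ hy₂star
    have hwc : w < c := lt_trans hwstar hcne
    have hIcc : Icc w c ⊆ Ioi (0:ℝ) := fun x hx => lt_of_lt_of_le hwpos hx.1
    obtain ⟨y0, hy0mem, hy0min⟩ :=
      isCompact_Icc.exists_isMinOn (nonempty_Icc.mpr hwc.le) (hhcont.mono hIcc)
    have hstarIcc : ystar ∈ Icc w c := ⟨hwstar.le, hcge⟩
    have hy0le : hfun y0 ≤ 0 := by
      have h1 : hfun ystar ≤ 0 := by rw [hh]; simp only; linarith
      exact le_trans (hy0min hstarIcc) h1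
    have hfw : 0 < hfun w := by
      have hslw := hnear0 w ⟨hwpos, hwy₂⟩
      rw [hh, hg]; linarith
    have hfc : 0 < hfun c := by rw [hh]; simp only; linarith
    have hy0w : w < y0 := by
      rcases eq_or_lt_of_le hy0mem.1 with hh' | hh'
      · exfalso; rw [← hh'] at hy0le; linarith
      · exact hh'
    have hy0c : y0 < c := by
      rcases eq_or_lt_of_le hy0mem.2 with hh' | hh'
      · exfalso; rw [hh'] at hy0le; linarith
      · exact hh'
    have hy0pos : (0:ℝ) < y0 := lt_trans hwpos hy0w
    have hy0I : y0 ∈ Ioi (0:ℝ) := hy0pos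
    have hlocmin : IsLocalMin hfun y0 := hy0min.isLocalMin (Icc_mem_nhds hy0w hy0c)
    -- derivative facts for hfun
    have hgderiv : ∀ x ∈ Ioi (0:ℝ), HasDerivAt g (-(1 / k) * (s * x ^ (s - 1))) x := by
      intro x hx
      rw [hg]
      exact ((Real.hasDerivAt_rpow_const (Or.inl (ne_of_gt hx))).const_mul
        (-(1 / k))).add_const (l / k)
    have hfd : ∀ x ∈ Ioi (0:ℝ),
        HasDerivAt hfun (deriv (deriv v) x - -(1 / k) * (s * x ^ (s - 1))) x := by
      intro x hx
      rw [hh]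
      exact (hBderiv x hx).sub (hgderiv x hx)
    have hB0 : deriv (deriv v) y0 = -(1 / k) * (s * y0 ^ (s - 1)) := by
      have h0 := hlocmin.hasDerivAt_eq_zero (hfd y0 hy0I)
      linarith [h0]
    -- second order condition
    have hfd' : HasDerivAt (fun x => deriv (deriv v) x - -(1 / k) * (s * x ^ (s - 1)))
        (deriv (deriv (deriv v)) y0 - -(1 / k) * (s * ((s - 1) * y0 ^ (s - 2)))) y0 := by
      apply HasDerivAt.sub (hCderiv y0 hy0I)
      have h0 := Real.hasDerivAt_rpow_const (x := y0) (p := s - 1) (Or.inl (ne_of_gt hy0pos))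
      have h1 := (h0.const_mul s).const_mul (-(1 / k))
      have hexp : s - 1 - 1 = s - 2 := by ring
      rw [hexp] at h1
      exact h1
    have hsecond : 0 ≤ deriv (deriv (deriv v)) y0 - -(1 / k) * (s * ((s - 1) * y0 ^ (s - 2))) := by
      apply second_deriv_test_min _ hfd' _ hlocmin
      · filter_upwards [hopen.mem_nhds hy0I] with x hx
        exact hfd x hx
      · have h0 := hlocmin.hasDerivAt_eq_zero (hfd y0 hy0I)
        exact h0
    -- binding value of G at y0
    have hu0pos : 0 < -k * deriv v y0 + l := hu_pos y0 hy0I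
    have hA0le : deriv v y0 ≤ -(1 / k) * y0 ^ s + l / k := by
      have := hy0le; rw [hh, hg] at this; simp only at this; linarith
    have htpos : (0:ℝ) < y0 ^ s := Real.rpow_pos_of_pos hy0pos _
    have hu0ge : y0 ^ s ≤ -k * deriv v y0 + l := by
      have h1 := mul_le_mul_of_nonneg_left hA0le hk.le
      have h2 : k * (-(1 / k) * y0 ^ s + l / k) = -(y0 ^ s) + l := by field_simp
      rw [h2] at h1
      linarith
    have hU : (-k * deriv v y0 + l) ^ (p - 1) ≤ y0 := by
      have h1 : (-k * deriv v y0 + l) ^ (p - 1) ≤ (y0 ^ s) ^ (p - 1) :=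
        Real.rpow_le_rpow_of_nonpos htpos hu0ge (by linarith)
      have h2 : (y0 ^ s) ^ (p - 1) = y0 := by
        rw [← Real.rpow_mul hy0pos.le, show s * (p - 1) = 1 by rw [hs]; field_simp,
          Real.rpow_one]
      linarith
    -- Phi = G along the ODE
    have hΦeq : ∀ x ∈ Ioi (0:ℝ),
        β * (v x - x * deriv v x) - E * x ^ 2 * deriv (deriv v) x + r * x * deriv v x
          = G p (-k * deriv v x + l) x := by
      intro x hx
      have h0 := hODE x hx
      rw [hE]
      linarith
    have hbind : G p (-k * deriv v y0 + l) y0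
        = (-k * deriv v y0 + l) ^ p / p - (-k * deriv v y0 + l) * y0 :=
      G_binding hp0 hp1 hu0pos hy0pos hU
    -- local minimum of Phi - Psi at y0
    have hΘ0 : β * (v y0 - y0 * deriv v y0) - E * y0 ^ 2 * deriv (deriv v) y0
        + r * y0 * deriv v y0
        - ((-k * deriv v y0 + l) ^ p / p - (-k * deriv v y0 + l) * y0) = 0 := by
      rw [hΦeq y0 hy0I, hbind]; ring
    have hΘmin : IsLocalMin (fun y => β * (v y - y * deriv v y) - E * y ^ 2 * deriv (deriv v) y
        + r * y * deriv v y
        - ((-k * deriv v y + l) ^ p / p - (-k * deriv v y + l) * y)) y0 := by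
      have hevmin : ∀ᶠ x in 𝓝 y0, (0:ℝ) ≤ β * (v x - x * deriv v x)
          - E * x ^ 2 * deriv (deriv v) x + r * x * deriv v x
          - ((-k * deriv v x + l) ^ p / p - (-k * deriv v x + l) * x) := by
        filter_upwards [hopen.mem_nhds hy0I] with x hx
        have h1 := G_ge hp0 hp1 (hu_pos x hx) hx
        rw [← hΦeq x hx] at h1
        linarith
      unfold IsLocalMin IsMinFilter
      filter_upwards [hevmin] with x hx
      linarith [hΘ0, hx]
    -- derivative of Phi - Psi at y0
    have hdvB := hBderiv y0 hy0I
    have hΦd : HasDerivAt (fun y => β * (v y - y * deriv v y) - E * y ^ 2 * deriv (deriv v) y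
        + r * y * deriv v y)
        (r * deriv v y0 + (r - β) * y0 * deriv (deriv v) y0
          - E * (2 * y0 * deriv (deriv v) y0 + y0 ^ 2 * deriv (deriv (deriv v)) y0)) y0 := by
      have h_yA : HasDerivAt (fun y => y * deriv v y)
          (1 * deriv v y0 + y0 * deriv (deriv v) y0) y0 := (hasDerivAt_id y0).mul hdvB
      have h_in : HasDerivAt (fun y => v y - y * deriv v y)
          (deriv v y0 - (1 * deriv v y0 + y0 * deriv (deriv v) y0)) y0 :=
        (hAderiv y0 hy0I).sub h_yA
      have h_1 := h_in.const_mul β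
      have h_2 := ((hasDerivAt_pow 2 y0).const_mul E).mul (hCderiv y0 hy0I)
      have h_3 : HasDerivAt (fun y => r * y * deriv v y)
          (r * 1 * deriv v y0 + r * y0 * deriv (deriv v) y0) y0 := by
        have hid : HasDerivAt (fun y : ℝ => r * y) (r * 1) y0 := (hasDerivAt_id y0).const_mul r
        exact hid.mul hdvB
      have hfinal := (h_1.sub h_2).add h_3
      refine hfinal.congr_deriv ?_
      push_cast
      ring
    have hΨd : HasDerivAt (fun y => (-k * deriv v y + l) ^ p / p - (-k * deriv v y + l) * y)
        (-k * deriv (deriv v) y0 * (-k * deriv v y0 + l) ^ (p - 1)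
          - (-k * deriv (deriv v) y0 * y0 + (-k * deriv v y0 + l))) y0 := by
      have hu : HasDerivAt (fun y => -k * deriv v y + l) (-k * deriv (deriv v) y0) y0 :=
        (hdvB.const_mul (-k)).add_const l
      have h1 := (hu.rpow_const (p := p) (Or.inl (ne_of_gt hu0pos))).div_const p
      have h2 := hu.mul (hasDerivAt_id y0)
      have hfinal := h1.sub h2
      refine hfinal.congr_deriv ?_
      simp only [id]
      field_simp
    have hE1 := hΘmin.hasDerivAt_eq_zero (hΦd.sub hΨd)
    -- algebraic endgame
    set A0 := deriv v y0 with hA0d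
    set B0 := deriv (deriv v) y0 with hB0d
    set c3 := deriv (deriv (deriv v)) y0 with hc3d
    have hB0pos : 0 < B0 := hv'' y0 hy0I
    have P1 : y0 * y0 ^ (s - 1) = y0 ^ s := by
      rw [show y0 * y0 ^ (s - 1) = y0 ^ (1:ℝ) * y0 ^ (s - 1) by rw [Real.rpow_one],
        ← Real.rpow_add hy0pos]
      norm_num
    have P2 : y0 ^ 2 * y0 ^ (s - 2) = y0 ^ s := by
      rw [show (y0:ℝ) ^ 2 = y0 ^ (2:ℝ) by rw [← Real.rpow_natCast y0 2]; norm_num,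
        ← Real.rpow_add hy0pos]
      norm_num
    -- multiplied-by-k facts
    have F1k : k * B0 = -(s * y0 ^ (s - 1)) := by
      rw [hB0]; field_simp
    have F2k : -(s * ((s - 1) * y0 ^ (s - 2))) ≤ k * c3 := by
      have h1 := mul_le_mul_of_nonneg_left hsecond hk.le
      have h2 : k * (c3 - -(1 / k) * (s * ((s - 1) * y0 ^ (s - 2))))
          = k * c3 + s * ((s - 1) * y0 ^ (s - 2)) := by field_simp; ring
      rw [mul_zero] at h1
      rw [h2] at h1
      linarith
    have F4k : k * A0 ≤ -(y0 ^ s) + l := by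
      have h1 := mul_le_mul_of_nonneg_left hA0le hk.le
      have h2 : k * (-(1 / k) * y0 ^ s + l / k) = -(y0 ^ s) + l := by field_simp
      rw [h2] at h1
      exact h1
    -- the ODE-derived equation multiplied by k
    have hEqk : r * (k * A0) + (-(k * (k * A0)) + k * l)
        + (k * B0) * (k * (-k * A0 + l) ^ (p - 1) - k * y0)
        = (β - r) * y0 * (k * B0) + E * (2 * y0 * (k * B0) + y0 ^ 2 * (k * c3)) := by
      linear_combination k * hE1
    -- lower bound for the right side
    have e1k : (β - r) * y0 * (k * B0) = -(s * (β - r)) * y0 ^ s := by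
      rw [F1k, ← P1]; ring
    have e2k : E * (2 * y0 * (k * B0)) = -(2 * E * s) * y0 ^ s := by
      rw [F1k, ← P1]; ring
    have e3k : -(E * s * (s - 1)) * y0 ^ s ≤ E * (y0 ^ 2 * (k * c3)) := by
      rw [← P2]
      have h1 := mul_le_mul_of_nonneg_left F2k (mul_pos hEpos (pow_pos hy0pos 2)).le
      linarith only [h1]
    -- upper bound for the left side
    have e4k : (k * B0) * (k * (-k * A0 + l) ^ (p - 1) - k * y0) ≤ 0 := by
      apply mul_nonpos_of_nonneg_of_nonpos (mul_pos hk hB0pos).le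
      have := mul_le_mul_of_nonneg_left hU hk.le
      linarith
    have e5k : r * (k * A0) + (-(k * (k * A0)) + k * l)
        ≤ (r - k) * (-(y0 ^ s) + l) + k * l := by
      have h1 := mul_le_mul_of_nonneg_left F4k hrk.le
      linarith only [h1]
    -- combine
    have hfin : -(s * (β - r)) * y0 ^ s + -(2 * E * s) * y0 ^ s + -(E * s * (s - 1)) * y0 ^ s
        ≤ (r - k) * (-(y0 ^ s) + l) + k * l := by
      calc -(s * (β - r)) * y0 ^ s + -(2 * E * s) * y0 ^ s + -(E * s * (s - 1)) * y0 ^ s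
          ≤ (β - r) * y0 * (k * B0) + E * (2 * y0 * (k * B0) + y0 ^ 2 * (k * c3)) := by
            rw [e1k]; linarith only [e2k, e3k]
        _ = r * (k * A0) + (-(k * (k * A0)) + k * l)
            + (k * B0) * (k * (-k * A0 + l) ^ (p - 1) - k * y0) := hEqk.symm
        _ ≤ (r - k) * (-(y0 ^ s) + l) + k * l := by linarith only [e4k, e5k]
    -- the coefficient identity and the contradiction
    have hident : (-(s * (β - r)) + -(2 * E * s) + -(E * s * (s - 1)) + r) * y0 ^ s
        = ((β - p * (μ ^ 2 / (2 * σ ^ 2 * (1 - p)) + r)) / (1 - p)) * y0 ^ s := by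
      have hco : -(s * (β - r)) + -(2 * E * s) + -(E * s * (s - 1)) + r
          = (β - p * (μ ^ 2 / (2 * σ ^ 2 * (1 - p)) + r)) / (1 - p) := by
        rw [hs, hE]
        field_simp
        ring
      rw [hco]
    have h8 : 0 ≤ ((β - p * (μ ^ 2 / (2 * σ ^ 2 * (1 - p)) + r)) / (1 - p) - r) * y0 ^ s :=
      mul_nonneg (by linarith [hκr]) htpos.le
    -- t > l*r/(r-k)
    have htlb : l * r / (r - k) < y0 ^ s := by
      have h1 := slack_bound c hcI hcneg
      have h2 : c ^ s < y0 ^ s := Real.rpow_lt_rpow_of_neg hy0pos hy0c hsneg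
      linarith
    have htlbk : l * r < y0 ^ s * (r - k) := by
      rw [← div_lt_iff₀ hrk]; exact htlb
    have hCt : 0 ≤ -(s * (β - r)) * y0 ^ s + -(2 * E * s) * y0 ^ s
        + -(E * s * (s - 1)) * y0 ^ s := by
      have hexp : -(s * (β - r)) * y0 ^ s + -(2 * E * s) * y0 ^ s
          + -(E * s * (s - 1)) * y0 ^ s
          = ((β - p * (μ ^ 2 / (2 * σ ^ 2 * (1 - p)) + r)) / (1 - p) - r) * y0 ^ s := by
        linear_combination hident
      rw [hexp]
      exact h8
    have hfin2 : (r - k) * y0 ^ s ≤ l * r := by linarith only [hfin, hCt]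
    linarith only [htlbk, hfin2]
  -- conclude
  refine ⟨ystar, hstarpos, ?_, ?_⟩
  · intro y hy
    have := hslack y hy
    rw [hg] at this
    simpa using this
  · intro y hy
    have := hmain y hy
    rw [hg] at this
    simpa using this
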